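/- Let ρ > 0 be a real parameter. The MKdV map of one degree of freedom, Φ(q,p) = (q̄,p̄) with p̄ = p + 2·log((1 + ρ·e^q)/(ρ + e^q)) and q̄ = q + 2·log((ρ + e^{p̄})/(1 + ρ·e^{p̄})), is area-preserving: at every point (q,p) ∈ ℝ² the Jacobian matrix of Φ has determinant equal to 1 (equivalently, dq̄ ∧ dp̄ = dq ∧ dp). -/

import Mathlib

noncomputable section

/-- First component update of the one-degree-of-freedom MKdV map:
`p̄(q,p) = p + 2 log((1+ρe^q)/(ρ+e^q))`. -/
def mkdvPbar (ρ : ℝ) (q p : ℝ) : ℝ :=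
  p + 2 * Real.log ((1 + ρ * Real.exp q) / (ρ + Real.exp q))

/-- Second component update of the one-degree-of-freedom MKdV map:
`q̄(q,p) = q + 2 log((ρ+e^{p̄})/(1+ρe^{p̄}))`. -/
def mkdvQbar (ρ : ℝ) (q p : ℝ) : ℝ :=
  q + 2 * Real.log ((ρ + Real.exp (mkdvPbar ρ q p)) / (1 + ρ * Real.exp (mkdvPbar ρ q p)))

lemma mkdv_pos1 (ρ : ℝ) (hρ : 0 < ρ) (s : ℝ) : 0 < 1 + ρ * Real.exp s :=
  add_pos one_pos (mul_pos hρ (Real.exp_pos s))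

lemma mkdv_pos2 (ρ : ℝ) (hρ : 0 < ρ) (s : ℝ) : 0 < ρ + Real.exp s :=
  add_pos hρ (Real.exp_pos s)

lemma hasDerivAt_F (ρ : ℝ) (hρ : 0 < ρ) (x : ℝ) :
    HasDerivAt (fun s => 2 * Real.log ((1 + ρ * Real.exp s) / (ρ + Real.exp s)))
      (2 * (ρ * Real.exp x / (1 + ρ * Real.exp x) - Real.exp x / (ρ + Real.exp x))) x := by
  have heq : (fun s => 2 * Real.log ((1 + ρ * Real.exp s) / (ρ + Real.exp s)))
      = fun s => 2 * (Real.log (1 + ρ * Real.exp s) - Real.log (ρ + Real.exp s)) := by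
    funext s
    rw [Real.log_div (mkdv_pos1 ρ hρ s).ne' (mkdv_pos2 ρ hρ s).ne']
  rw [heq]
  have h1 : HasDerivAt (fun s => Real.log (1 + ρ * Real.exp s))
      (ρ * Real.exp x / (1 + ρ * Real.exp x)) x :=
    (((Real.hasDerivAt_exp x).const_mul ρ).const_add 1).log (mkdv_pos1 ρ hρ x).ne'
  have h2 : HasDerivAt (fun s => Real.log (ρ + Real.exp s))
      (Real.exp x / (ρ + Real.exp x)) x :=
    ((Real.hasDerivAt_exp x).const_add ρ).log (mkdv_pos2 ρ hρ x).ne'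
  exact (h1.sub h2).const_mul 2

lemma hasDerivAt_G (ρ : ℝ) (hρ : 0 < ρ) (x : ℝ) :
    HasDerivAt (fun s => 2 * Real.log ((ρ + Real.exp s) / (1 + ρ * Real.exp s)))
      (2 * (Real.exp x / (ρ + Real.exp x) - ρ * Real.exp x / (1 + ρ * Real.exp x))) x := by
  have heq : (fun s => 2 * Real.log ((ρ + Real.exp s) / (1 + ρ * Real.exp s)))
      = fun s => 2 * (Real.log (ρ + Real.exp s) - Real.log (1 + ρ * Real.exp s)) := by
    funext s
    rw [Real.log_div (mkdv_pos2 ρ hρ s).ne' (mkdv_pos1 ρ hρ s).ne']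
  rw [heq]
  have h1 : HasDerivAt (fun s => Real.log (1 + ρ * Real.exp s))
      (ρ * Real.exp x / (1 + ρ * Real.exp x)) x :=
    (((Real.hasDerivAt_exp x).const_mul ρ).const_add 1).log (mkdv_pos1 ρ hρ x).ne'
  have h2 : HasDerivAt (fun s => Real.log (ρ + Real.exp s))
      (Real.exp x / (ρ + Real.exp x)) x :=
    ((Real.hasDerivAt_exp x).const_add ρ).log (mkdv_pos2 ρ hρ x).ne'
  exact (h2.sub h1).const_mul 2

/-- The one-degree-of-freedom MKdV map (with parameter `ρ > 0`) is area-preserving: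
at every point of `ℝ²` the determinant of its Jacobian matrix equals `1`. -/
theorem mkdv_map_symplectic (ρ : ℝ) (hρ : 0 < ρ) (q p : ℝ) :
    (Matrix.det
      !![deriv (fun s => mkdvQbar ρ s p) q, deriv (fun s => mkdvQbar ρ q s) p;
         deriv (fun s => mkdvPbar ρ s p) q, deriv (fun s => mkdvPbar ρ q s) p]) = 1 := by
  set pb := mkdvPbar ρ q p with hpb
  set Dq := 2 * (ρ * Real.exp q / (1 + ρ * Real.exp q) - Real.exp q / (ρ + Real.exp q)) with hDq
  set Gd := 2 * (Real.exp pb / (ρ + Real.exp pb) - ρ * Real.exp pb / (1 + ρ * Real.exp pb))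
    with hGd
  have h1 : HasDerivAt (fun s => mkdvPbar ρ s p) Dq q := by
    simpa [mkdvPbar] using (hasDerivAt_F ρ hρ q).const_add p
  have h2 : HasDerivAt (fun s => mkdvPbar ρ q s) 1 p := by
    simpa [mkdvPbar] using (hasDerivAt_id p).add_const
      (2 * Real.log ((1 + ρ * Real.exp q) / (ρ + Real.exp q)))
  have h3 : HasDerivAt (fun s => mkdvQbar ρ s p) (1 + Gd * Dq) q := by
    have hc := ((hasDerivAt_G ρ hρ pb).comp q h1)
    simpa [mkdvQbar, Pi.add_def, Function.comp_def] using (hasDerivAt_id q).add hc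
  have h4 : HasDerivAt (fun s => mkdvQbar ρ q s) (Gd * 1) p := by
    have hc := ((hasDerivAt_G ρ hρ pb).comp p h2)
    simpa [mkdvQbar, Pi.add_def, Function.comp_def] using (hasDerivAt_const p q).add hc
  rw [h1.deriv, h2.deriv, h3.deriv, h4.deriv, Matrix.det_fin_two_of]
  ring
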